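/- If a graph G has a dominating induced matching and H is a homogeneous set in G with |N(H)| ≥ 2, then H is either a stable set or G[H] is a disjoint union of edges (a perfect matching on H). -/

import Mathlib

/-- `M` is an induced matching of `G` that dominates every edge:
edges of `M` are edges of `G`, pairwise at distance at least two,
and every edge of `G` shares an endpoint with some edge of `M`. -/
def IsDIM {V : Type*} (G : SimpleGraph V) (M : Set (Sym2 V)) : Prop :=
  M ⊆ G.edgeSet ∧
  (∀ e ∈ M, ∀ f ∈ M, e ≠ f → ∀ u ∈ e, ∀ v ∈ f, u ≠ v ∧ ¬ G.Adj u v) ∧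
  (∀ e ∈ G.edgeSet, ∃ f ∈ M, ∃ u, u ∈ e ∧ u ∈ f)

/-- `H` is a homogeneous set of `G`: a proper vertex subset with at least two
elements such that every outside vertex sees all of `H` or none of `H`. -/
def IsHomogeneous {V : Type*} (G : SimpleGraph V) (H : Set V) : Prop :=
  2 ≤ H.ncard ∧ H ≠ Set.univ ∧
  ∀ v ∉ H, (∀ h ∈ H, G.Adj v h) ∨ (∀ h ∈ H, ¬ G.Adj v h)

/-- The outside neighborhood of a vertex set `H`. -/
def homNbhd {V : Type*} (G : SimpleGraph V) (H : Set V) : Set V :=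
  {v | v ∉ H ∧ ∃ h ∈ H, G.Adj v h}

/-- In a graph with a dominating induced matching, a homogeneous set with at least
two outside neighbors is stable or induces a disjoint union of edges. -/
theorem dim_hom_two_nbrs_structure {V : Type*} [Fintype V] (G : SimpleGraph V)
    (h : ∃ M, IsDIM G M) (H : Set V) (hH : IsHomogeneous G H)
    (hN : 2 ≤ (homNbhd G H).ncard) :
    (∀ a ∈ H, ∀ b ∈ H, ¬ G.Adj a b) ∨
    (∀ a ∈ H, ∃! b, b ∈ H ∧ G.Adj a b) := by
  classical
  obtain ⟨M, hME, hInd, hDom⟩ := h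
  obtain ⟨hHcard, hHne, hhom⟩ := hH
  -- every outside neighbor is complete to H
  have hcomp : ∀ v ∈ homNbhd G H, ∀ w ∈ H, G.Adj v w := by
    rintro v ⟨hvH, h₀, hh₀, hadj⟩ w hw
    rcases hhom v hvH with h1 | h2
    · exact h1 w hw
    · exact absurd hadj (h2 h₀ hh₀)
  by_cases hstab : ∀ a ∈ H, ∀ b ∈ H, ¬ G.Adj a b
  · exact Or.inl hstab
  right
  push_neg at hstab
  obtain ⟨a₀, ha₀, b₀, hb₀, hab₀⟩ := hstab
  -- a matching edge dominating the H-edge a₀b₀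
  obtain ⟨f, hfM, u, huab, huf⟩ := hDom s(a₀, b₀) hab₀
  have huH : u ∈ H := by
    rcases Sym2.mem_iff.1 huab with h | h <;> subst h <;> assumption
  obtain ⟨w, hwH, huw⟩ : ∃ w ∈ H, G.Adj u w := by
    rcases Sym2.mem_iff.1 huab with h | h <;> subst h
    · exact ⟨b₀, hb₀, hab₀⟩
    · exact ⟨a₀, ha₀, hab₀.symm⟩
  -- the other endpoint x of f
  set x := Sym2.Mem.other huf with hx_def
  have hfx : s(u, x) = f := Sym2.other_spec huf
  have hux : G.Adj u x := by
    have hfE := hME hfM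
    rw [← hfx] at hfE
    exact hfE
  have hxf : x ∈ f := by rw [← hfx]; exact Sym2.mem_mk_right u x
  -- x lies in H (else use a second outside neighbor for a contradiction)
  have hxH : x ∈ H := by
    by_contra hxH
    have hxN : x ∈ homNbhd G H := ⟨hxH, u, huH, hux.symm⟩
    obtain ⟨y, hyN, hyx⟩ := Set.exists_ne_of_one_lt_ncard (s := homNbhd G H) (by omega) x
    have hyH : y ∉ H := hyN.1
    have hyw : G.Adj y w := hcomp y hyN w hwH
    obtain ⟨g, hgM, t, htyw, htg⟩ := hDom s(y, w) hyw
    have hgf : g ≠ f := by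
      intro hEq; subst hEq
      have htf : t ∈ s(u, x) := by rw [hfx]; exact htg
      rcases Sym2.mem_iff.1 htyw with h | h <;> subst h <;>
        rcases Sym2.mem_iff.1 htf with h' | h'
      · exact hyH (h' ▸ huH)
      · exact hyx h'
      · exact (G.loopless.irrefl u (h' ▸ huw)).elim
      · exact hxH (h' ▸ hwH)
    have hkey := (hInd g hgM f hfM hgf t htg u huf).2
    rcases Sym2.mem_iff.1 htyw with h | h <;> subst h
    · exact hkey (hcomp _ hyN u huH)
    · exact hkey huw.symm
  -- an arbitrary outside neighbor
  have hvne : (homNbhd G H).Nonempty := Set.nonempty_of_ncard_ne_zero (by omega)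
  obtain ⟨v, hvN⟩ := hvne
  have hvH : v ∉ H := hvN.1
  intro a ha
  have hva : G.Adj v a := hcomp v hvN a ha
  obtain ⟨g, hgM, t, htva, htg⟩ := hDom s(v, a) hva
  have hta : t = a := by
    rcases Sym2.mem_iff.1 htva with h | h
    · exfalso
      have hvg : v ∈ g := h ▸ htg
      have hgf : g ≠ f := by
        intro hEq; subst hEq
        have : v ∈ s(u, x) := by rw [hfx]; exact hvg
        rcases Sym2.mem_iff.1 this with h' | h'
        · exact hvH (h' ▸ huH)
        · exact hvH (h' ▸ hxH)
      exact (hInd g hgM f hfM hgf v hvg u huf).2 (hcomp v hvN u huH)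
    · exact h
  subst hta
  -- the matching partner b of a
  set b := Sym2.Mem.other htg with hb_def
  have hgb : s(t, b) = g := Sym2.other_spec htg
  have hab : G.Adj t b := by
    have hgE := hME hgM
    rw [← hgb] at hgE
    exact hgE
  have hbg : b ∈ g := by rw [← hgb]; exact Sym2.mem_mk_right t b
  have hbH : b ∈ H := by
    by_contra hbH
    have hgf : g ≠ f := by
      intro hEq; subst hEq
      have : b ∈ s(u, x) := by rw [hfx]; exact hbg
      rcases Sym2.mem_iff.1 this with h' | h'
      · exact hbH (h' ▸ huH)
      · exact hbH (h' ▸ hxH)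
    have hbN : b ∈ homNbhd G H := ⟨hbH, t, ha, hab.symm⟩
    exact (hInd g hgM f hfM hgf b hbg u huf).2 (hcomp b hbN u huH)
  refine ⟨b, ⟨hbH, hab⟩, ?_⟩
  rintro c ⟨hcH, hac⟩
  have hvc : G.Adj v c := hcomp v hvN c hcH
  obtain ⟨g', hg'M, t', ht'vc, ht'g'⟩ := hDom s(v, c) hvc
  rcases Sym2.mem_iff.1 ht'vc with h | h
  · exfalso
    have hvg' : v ∈ g' := h ▸ ht'g'
    have hgg : g' ≠ g := by
      intro hEq; subst hEq
      have : v ∈ s(t, b) := by rw [hgb]; exact hvg'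
      rcases Sym2.mem_iff.1 this with h' | h'
      · exact hvH (h' ▸ ha)
      · exact hvH (h' ▸ hbH)
    exact (hInd g' hg'M g hgM hgg v hvg' t htg).2 (hcomp v hvN t ha)
  · have hcg' : c ∈ g' := h ▸ ht'g'
    by_cases hgg : g' = g
    · have : c ∈ s(t, b) := by rw [hgb, ← hgg]; exact hcg'
      rcases Sym2.mem_iff.1 this with h' | h'
      · exact (G.loopless.irrefl t (h' ▸ hac)).elim
      · exact h'
    · exact ((hInd g' hg'M g hgM hgg c hcg' t htg).2 hac.symm).elim
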